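/- For every integer K ≥ 0 and every real t with 0 < t ≤ 1/4, one has ∑_{n≥0} Cat_n · Cat_{n+K} · t^{2n} = ((K+1)·Cat_K / (4(1−2K)·t²)) · ( ∑_{n≥0} ((−1/2)^{↑n} · (K−1/2)^{↑n} / ((K+1)^{↑n} · n!)) · (16t²)^n − 1 ), where both series converge. -/

import Mathlib

open Polynomial

lemma cat_rec (n : ℕ) : (n + 2) * catalan (n + 1) = 2 * (2 * n + 1) * catalan n := by
  have h1 := succ_mul_catalan_eq_centralBinom (n + 1)
  have h2 := Nat.succ_mul_centralBinom_succ n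
  have h3 := succ_mul_catalan_eq_centralBinom n
  have key : (n + 1) * ((n + 2) * catalan (n + 1)) = (n + 1) * (2 * (2 * n + 1) * catalan n) := by
    rw [h1]
    calc (n + 1) * Nat.centralBinom (n + 1) = 2 * (2 * n + 1) * Nat.centralBinom n := h2
      _ = 2 * (2 * n + 1) * ((n + 1) * catalan n) := by rw [h3]
      _ = (n + 1) * (2 * (2 * n + 1) * catalan n) := by ring
  exact Nat.eq_of_mul_eq_mul_left (Nat.succ_pos n) key

lemma cat_rec_real (n : ℕ) :
    ((n : ℝ) + 2) * (catalan (n + 1) : ℝ) = 2 * (2 * (n : ℝ) + 1) * (catalan n : ℝ) := by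
  exact_mod_cast cat_rec n

lemma centralBinom_le_four_pow (n : ℕ) : Nat.centralBinom n ≤ 4 ^ n := by
  calc Nat.centralBinom n = (2 * n).choose n := Nat.centralBinom_eq_two_mul_choose n
    _ ≤ (2 * n + 1).choose n := Nat.choose_le_choose n (Nat.le_succ _)
    _ ≤ 4 ^ n := Nat.choose_middle_le_pow n

lemma catalan_pos' (n : ℕ) : 0 < catalan n := by
  rcases Nat.eq_zero_or_pos (catalan n) with h | h
  · exfalso
    have h2 := succ_mul_catalan_eq_centralBinom n
    rw [h, Nat.mul_zero] at h2
    exact Nat.centralBinom_ne_zero n h2.symm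
  · exact h

lemma catalan_le_real (n : ℕ) : (catalan n : ℝ) ≤ 4 ^ n / ((n : ℝ) + 1) := by
  rw [le_div_iff₀ (by positivity)]
  have h : (n + 1) * catalan n ≤ 4 ^ n := by
    rw [succ_mul_catalan_eq_centralBinom]; exact centralBinom_le_four_pow n
  calc (catalan n : ℝ) * ((n : ℝ) + 1) = ((n + 1) * catalan n : ℕ) := by push_cast; ring
    _ ≤ ((4 : ℕ) ^ n : ℝ) := by exact_mod_cast h
    _ = 4 ^ n := by push_cast; ring

lemma key_id (K n : ℕ) :
    (ascPochhammer ℝ (n + 1)).eval (-(1 / 2) : ℝ) *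
        (ascPochhammer ℝ (n + 1)).eval ((K : ℝ) - 1 / 2) * 16 ^ (n + 1) * ((K : ℝ) + 1) *
        (catalan K : ℝ) =
      4 * (1 - 2 * (K : ℝ)) * (catalan n : ℝ) * (catalan (n + K) : ℝ) *
        (ascPochhammer ℝ (n + 1)).eval ((K : ℝ) + 1) * ((n + 1).factorial : ℝ) := by
  induction n with
  | zero =>
    simp [ascPochhammer_one]
    ring
  | succ n ih =>
    have e1 := ascPochhammer_succ_eval (S := ℝ) (n + 1) (-(1 / 2) : ℝ)
    have e2 := ascPochhammer_succ_eval (S := ℝ) (n + 1) ((K : ℝ) - 1 / 2)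
    have e3 := ascPochhammer_succ_eval (S := ℝ) (n + 1) ((K : ℝ) + 1)
    have hc1 := cat_rec_real n
    have hc2 := cat_rec_real (n + K)
    have hf : ((n + 1 + 1).factorial : ℝ) = ((n : ℝ) + 2) * ((n + 1).factorial : ℝ) := by
      rw [Nat.factorial_succ]; push_cast; ring
    have hca : n + 1 + K = n + K + 1 := by ring
    rw [e1, e2, e3, hf, hca]
    push_cast at hc1 hc2 ⊢
    set P := (ascPochhammer ℝ (n + 1)).eval (-(1 / 2) : ℝ)
    set Q := (ascPochhammer ℝ (n + 1)).eval ((K : ℝ) - 1 / 2)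
    set R := (ascPochhammer ℝ (n + 1)).eval ((K : ℝ) + 1)
    set F := ((n + 1).factorial : ℝ)
    linear_combination (16 * (-(1 / 2 : ℝ) + ((n : ℝ) + 1)) * (((K : ℝ) - 1 / 2) + ((n : ℝ) + 1))) * ih
      - (4 * (1 - 2 * (K : ℝ)) * R * F * (((K : ℝ) + 1) + ((n : ℝ) + 1)) * (catalan (n + K + 1) : ℝ)) * hc1
      - (4 * (1 - 2 * (K : ℝ)) * R * F * 2 * (2 * (n : ℝ) + 1) * (catalan n : ℝ)) * hc2

theorem stmt_4 (K : ℕ) (t : ℝ) (ht0 : 0 < t) (ht : t ≤ 1 / 4) :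
    Summable (fun n : ℕ => (catalan n : ℝ) * (catalan (n + K) : ℝ) * t ^ (2 * n)) ∧
    Summable (fun n : ℕ =>
      (ascPochhammer ℝ n).eval (-(1 / 2) : ℝ) * (ascPochhammer ℝ n).eval ((K : ℝ) - 1 / 2) /
        ((ascPochhammer ℝ n).eval ((K : ℝ) + 1) * (n.factorial : ℝ)) * (16 * t ^ 2) ^ n) ∧
    (∑' n : ℕ, (catalan n : ℝ) * (catalan (n + K) : ℝ) * t ^ (2 * n)) =
      ((K : ℝ) + 1) * (catalan K : ℝ) / (4 * (1 - 2 * (K : ℝ)) * t ^ 2) *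
        ((∑' n : ℕ,
          (ascPochhammer ℝ n).eval (-(1 / 2) : ℝ) * (ascPochhammer ℝ n).eval ((K : ℝ) - 1 / 2) /
            ((ascPochhammer ℝ n).eval ((K : ℝ) + 1) * (n.factorial : ℝ)) * (16 * t ^ 2) ^ n) - 1) := by
  set g : ℕ → ℝ := fun n => (catalan n : ℝ) * (catalan (n + K) : ℝ) * t ^ (2 * n) with hg
  set f : ℕ → ℝ := fun n =>
      (ascPochhammer ℝ n).eval (-(1 / 2) : ℝ) * (ascPochhammer ℝ n).eval ((K : ℝ) - 1 / 2) /
        ((ascPochhammer ℝ n).eval ((K : ℝ) + 1) * (n.factorial : ℝ)) * (16 * t ^ 2) ^ n with hf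
  set c : ℝ := 4 * (1 - 2 * (K : ℝ)) * t ^ 2 / (((K : ℝ) + 1) * (catalan K : ℝ)) with hc
  have hK1 : (0 : ℝ) < (K : ℝ) + 1 := by positivity
  have hCK : (0 : ℝ) < (catalan K : ℝ) := by exact_mod_cast catalan_pos' K
  have h12 : (1 : ℝ) - 2 * (K : ℝ) ≠ 0 := by
    rcases K with _ | K
    · norm_num
    · push_cast
      have : (0 : ℝ) ≤ (K : ℝ) := Nat.cast_nonneg K
      nlinarith
  have htne : t ≠ 0 := ne_of_gt ht0
  -- termwise identity : f (n+1) = c * g n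
  have hterm : ∀ n : ℕ, f (n + 1) = c * g n := by
    intro n
    have hR : (0 : ℝ) < (ascPochhammer ℝ (n + 1)).eval ((K : ℝ) + 1) :=
      ascPochhammer_pos (n + 1) _ hK1
    have hfac : (0 : ℝ) < ((n + 1).factorial : ℝ) := by exact_mod_cast (n + 1).factorial_pos
    have hkey := key_id K n
    have hx : (16 * t ^ 2) ^ (n + 1) = 16 ^ (n + 1) * (t ^ (2 * n) * t ^ 2) := by
      rw [mul_pow, pow_mul]; ring
    simp only [hf, hg, hc, hx]
    set P := (ascPochhammer ℝ (n + 1)).eval (-(1 / 2) : ℝ) with hP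
    set Q := (ascPochhammer ℝ (n + 1)).eval ((K : ℝ) - 1 / 2) with hQ
    set R := (ascPochhammer ℝ (n + 1)).eval ((K : ℝ) + 1) with hRR
    set F := (((n + 1).factorial : ℕ) : ℝ) with hF
    rw [div_mul_eq_mul_div, div_eq_iff (by positivity)]
    field_simp
    linear_combination hkey
  -- summability of g
  have hbound : ∀ n : ℕ, g n ≤ (4 : ℝ) ^ K * (1 / ((n : ℝ) + 1) ^ 2) := by
    intro n
    have h1 : (catalan n : ℝ) ≤ 4 ^ n / ((n : ℝ) + 1) := catalan_le_real n
    have h2 : (catalan (n + K) : ℝ) ≤ 4 ^ (n + K) / ((n : ℝ) + 1) := by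
      calc (catalan (n + K) : ℝ) ≤ 4 ^ (n + K) / (((n + K : ℕ) : ℝ) + 1) := catalan_le_real (n + K)
        _ ≤ 4 ^ (n + K) / ((n : ℝ) + 1) := by
            apply div_le_div_of_nonneg_left (by positivity) (by positivity)
            push_cast
            linarith [Nat.cast_nonneg (α := ℝ) K]
    have h3 : t ^ (2 * n) ≤ (1 / 16 : ℝ) ^ n := by
      rw [pow_mul]
      apply pow_le_pow_left₀ (by positivity)
      nlinarith
    have h4 : g n ≤ (4 ^ n / ((n : ℝ) + 1)) * (4 ^ (n + K) / ((n : ℝ) + 1)) * (1 / 16 : ℝ) ^ n := by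
      simp only [hg]
      have c1 : (0 : ℝ) ≤ (catalan n : ℝ) := by positivity
      have c2 : (0 : ℝ) ≤ (catalan (n + K) : ℝ) := by positivity
      have c3 : (0 : ℝ) ≤ t ^ (2 * n) := by positivity
      apply mul_le_mul (mul_le_mul h1 h2 c2 (by positivity)) h3 c3 (by positivity)
    refine h4.trans_eq ?_
    have h16 : ((1 : ℝ) / 16) ^ n = 1 / (4 ^ n * 4 ^ n) := by
      rw [show ((1 : ℝ) / 16) = 1 / (4 * 4) by norm_num, div_pow, mul_pow]
      norm_num
    rw [pow_add, h16]
    have h4n : (0 : ℝ) < 4 ^ n := by positivity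
    field_simp
  have hgsum : Summable g := by
    apply Summable.of_nonneg_of_le (fun n => by positivity) hbound
    apply Summable.mul_left
    have hp : Summable (fun n : ℕ => 1 / (n : ℝ) ^ 2) :=
      Real.summable_one_div_nat_pow.mpr one_lt_two
    have hsh := (summable_nat_add_iff 1).mpr hp
    refine hsh.congr fun n => ?_
    push_cast
    ring
  -- summability of f
  have hfsum : Summable f := by
    rw [← summable_nat_add_iff 1]
    exact ((hgsum.mul_left c).congr fun n => (hterm n).symm)
  refine ⟨hgsum, hfsum, ?_⟩
  have hf0 : f 0 = 1 := by simp [hf]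
  have htsum : (∑' n, f n) = 1 + c * (∑' n, g n) := by
    rw [Summable.tsum_eq_zero_add hfsum, hf0]
    congr 1
    rw [tsum_congr hterm, tsum_mul_left]
  rw [htsum, add_sub_cancel_left]
  rw [← mul_assoc]
  have hinv : ((K : ℝ) + 1) * (catalan K : ℝ) / (4 * (1 - 2 * (K : ℝ)) * t ^ 2) * c = 1 := by
    rw [hc]
    field_simp
    exact div_self (by intro h; apply h12; linarith)
  rw [hinv, one_mul]
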